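/- arXiv:1506.00718 — 2 statements merged into one kernel-verified Lean document; each statement's English description precedes it below -/
import Mathlib

section
/- Let φ(μ,λ,τ) = μ(e^{(k-r+1)λ} - 1)·C(k,r-1)·(1+τ)^{r-1} - λτ with k ≥ r ≥ 3 integers. If 0 < μ < μ_c(k,r) := C(k,r)^{-1}·(r-2)^{r-2}/(r(r-1)^{r-1}), then for τ = 1/(r-2) there exists λ > 0 such that φ(μ,λ,τ) < 0. -/
/-- Let `φ(μ,λ,τ) = μ(e^{(k-r+1)λ} - 1)·C(k,r-1)·(1+τ)^(r-1) - λτ` with `k ≥ r ≥ 3` integers.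
If `0 < μ < μ_c(k,r) = C(k,r)⁻¹·(r-2)^(r-2)/(r(r-1)^(r-1))`, then for `τ = 1/(r-2)`
there exists `λ > 0` such that `φ(μ,λ,τ) < 0`. -/
theorem stmt_4 (k r : ℕ) (hr : 3 ≤ r) (hk : r ≤ k) (μ : ℝ) (hμ : 0 < μ)
    (hμc : μ < ((k.choose r : ℝ))⁻¹ * (((r : ℝ) - 2) ^ (r - 2) /
      ((r : ℝ) * ((r : ℝ) - 1) ^ (r - 1)))) :
    ∃ lam : ℝ, 0 < lam ∧
      μ * (Real.exp (((k : ℝ) - r + 1) * lam) - 1) * (k.choose (r - 1) : ℝ)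
          * (1 + 1 / ((r : ℝ) - 2)) ^ (r - 1) - lam * (1 / ((r : ℝ) - 2)) < 0 := by
  have hr3 : (3 : ℝ) ≤ (r : ℝ) := by exact_mod_cast hr
  have hkr : (r : ℝ) ≤ (k : ℝ) := by exact_mod_cast hk
  set s : ℝ := (r : ℝ) - 2 with hs_def
  have hs1 : (1 : ℝ) ≤ s := by simp [hs_def]; linarith
  have hs0 : 0 < s := by linarith
  set τ : ℝ := 1 / s with hτ_def
  have hτ0 : 0 < τ := by positivity
  set c : ℝ := (k : ℝ) - r + 1 with hc_def
  have hc0 : 0 < c := by simp [hc_def]; linarith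
  set C : ℝ := (k.choose (r - 1) : ℝ) with hC_def
  have hC0 : 0 < C := by
    rw [hC_def]
    exact_mod_cast Nat.choose_pos (le_trans (Nat.sub_le r 1) hk)
  set P : ℝ := (1 + τ) ^ (r - 1) with hP_def
  have hP0 : 0 < P := by positivity
  set A : ℝ := μ * c * C * P with hA_def
  have hA0 : 0 < A := by positivity
  -- choose identity: C(k,r) * r = C(k, r-1) * (k - (r-1))
  have hchoose : (k.choose r : ℝ) * r = C * c := by
    have h1 : k.choose ((r - 1) + 1) * ((r - 1) + 1) = k.choose (r - 1) * (k - (r - 1)) :=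
      Nat.choose_succ_right_eq k (r - 1)
    have h2 : r - 1 + 1 = r := by omega
    rw [h2] at h1
    have h3 : ((k - (r - 1) : ℕ) : ℝ) = c := by
      have hle : r - 1 ≤ k := le_trans (Nat.sub_le r 1) hk
      rw [hc_def, Nat.cast_sub hle, Nat.cast_sub (show 1 ≤ r by omega)]
      push_cast
      ring
    have h4 := congrArg (Nat.cast : ℕ → ℝ) h1
    push_cast at h4
    rw [hC_def, ← h3]
    push_cast
    linarith [h4]
  have hCkr0 : 0 < (k.choose r : ℝ) := by exact_mod_cast Nat.choose_pos hk
  -- pow facts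
  have hpow1 : P = ((r : ℝ) - 1) ^ (r - 1) / s ^ (r - 1) := by
    have hb : 1 + τ = ((r : ℝ) - 1) / s := by
      rw [hτ_def]
      field_simp [hs_def]
      ring
    rw [hP_def, hb, div_pow]
  have hpow2 : s ^ (r - 1) = s ^ (r - 2) * s := by
    have : r - 1 = (r - 2) + 1 := by omega
    rw [this, pow_succ]
  -- Key: A < τ
  have hKey : A < τ := by
    have hμc' : μ * ((k.choose r : ℝ) * ((r : ℝ) * ((r : ℝ) - 1) ^ (r - 1))) < s ^ (r - 2) := by
      have hpos : 0 < (k.choose r : ℝ) * ((r : ℝ) * ((r : ℝ) - 1) ^ (r - 1)) := by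
        apply mul_pos hCkr0
        exact mul_pos (by linarith) (pow_pos (by linarith : (0:ℝ) < (r : ℝ) - 1) _)
      rw [← lt_div_iff₀ hpos]
      calc μ < ((k.choose r : ℝ))⁻¹ * (s ^ (r - 2) / ((r : ℝ) * ((r : ℝ) - 1) ^ (r - 1))) := hμc
        _ = s ^ (r - 2) / ((k.choose r : ℝ) * ((r : ℝ) * ((r : ℝ) - 1) ^ (r - 1))) := by
            field_simp
    have hAeq : A = μ * ((k.choose r : ℝ) * ((r : ℝ) * ((r : ℝ) - 1) ^ (r - 1))) / s ^ (r - 1) := by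
      have hre : μ * c * C * (((r : ℝ) - 1) ^ (r - 1) / s ^ (r - 1))
          = μ * (C * c * ((r : ℝ) - 1) ^ (r - 1)) / s ^ (r - 1) := by ring
      rw [hA_def, hpow1, hre, ← hchoose]
      ring
    rw [hAeq, hτ_def, div_lt_div_iff₀ (by positivity) hs0, hpow2]
    calc μ * ((k.choose r : ℝ) * ((r : ℝ) * ((r : ℝ) - 1) ^ (r - 1))) * s
        < s ^ (r - 2) * s := by
          apply mul_lt_mul_of_pos_right hμc' hs0
      _ ≤ 1 * (s ^ (r - 2) * s) := by linarith
  -- choose lam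
  set t : ℝ := τ / A with ht_def
  have ht1 : 1 < t := (one_lt_div hA0).mpr hKey
  have hlogt : 0 < Real.log t := Real.log_pos ht1
  refine ⟨Real.log t / (2 * c), by positivity, ?_⟩
  set lam : ℝ := Real.log t / (2 * c) with hlam_def
  have hlam0 : 0 < lam := by positivity
  have hcl : c * lam = Real.log t / 2 := by
    rw [hlam_def]; field_simp
  set E : ℝ := Real.exp (c * lam) with hE_def
  have hE1 : 1 ≤ E := Real.one_le_exp (by positivity)
  have hEt : E < t := by
    rw [hE_def, hcl]
    calc Real.exp (Real.log t / 2) < Real.exp (Real.log t) := by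
          apply Real.exp_lt_exp.mpr; linarith
      _ = t := Real.exp_log (by linarith)
  have hAE : A * E < τ := by
    have := (mul_lt_mul_of_pos_left hEt hA0)
    rwa [ht_def, mul_div_cancel₀ _ (ne_of_gt hA0)] at this
  have hexp_bound : E - 1 ≤ c * lam * E := by
    have h1 : 1 - c * lam ≤ Real.exp (-(c * lam)) := by
      linarith [Real.add_one_le_exp (-(c*lam))]
    have h2 : Real.exp (-(c*lam)) * E = 1 := by
      rw [hE_def, ← Real.exp_add]; simp
    nlinarith [Real.exp_pos (c*lam), Real.exp_pos (-(c*lam))]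
  -- assemble
  have hfinal : μ * (E - 1) * C * P - lam * τ < 0 := by
    have h1 : μ * (E - 1) * C * P ≤ μ * (c * lam * E) * C * P := by
      gcongr
      all_goals first | exact hμ.le | exact hC0.le | exact hP0.le | exact hexp_bound
    have h2 : μ * (c * lam * E) * C * P = lam * (A * E) := by
      rw [hA_def]; ring
    have h3 : lam * (A * E) < lam * τ := by
      exact mul_lt_mul_of_pos_left hAE hlam0
    linarith
  exact hfinal
end

section
/- Fix integers k ≥ r ≥ 2 and reals μ > 0, τ > 0, λ. Define for each n the sequence λ_j^{(s)} by λ_{k-r+1}^{(s)} = λ for all s, λ_j^{(0)} = 0 for j ≥ k-r+2, and λ_j^{(s)} = λ_j^{(s-1)} + log(1 - j/N(t-s+1) + (j/N(t-s+1))·e^{λ_{j-1}^{(s-1)}}) where N(t) = n - ℓ(n) - t and t = ⌊τℓ(n)⌋, with ℓ(n) → ∞ and ℓ(n)/n → 0. Then for each j ∈ {k-r+1, …, k}, exp(λ_j^{(t)}) = 1 + C(j, k-r+1)·(t/n)^{j-k+r-1}·(e^{λ} - 1) + O(ℓ(n)^{j-k+r-2}/n^{j-k+r-1} · max{1, ℓ(n)^2/n})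 as n → ∞. -/
open Finset

lemma aux_prod (F : Finset ℕ) (a : ℕ → ℝ) :
    |(∏ u ∈ F, (1 + a u)) - 1 - ∑ u ∈ F, a u| ≤
      (∑ u ∈ F, |a u|) ^ 2 * Real.exp (∑ u ∈ F, |a u|) := by
  induction F using Finset.cons_induction with
  | empty => simp
  | cons i F hi ih =>
    rw [Finset.prod_cons, Finset.sum_cons, Finset.sum_cons]
    set P := ∏ u ∈ F, (1 + a u)
    set Sa := ∑ u ∈ F, a u
    set S := ∑ u ∈ F, |a u|
    have hS0 : 0 ≤ S := Finset.sum_nonneg fun _ _ => abs_nonneg _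
    have hS : |Sa| ≤ S := Finset.abs_sum_le_sum_abs _ _
    have key : (1 + a i) * P - 1 - (a i + Sa)
        = (P - 1 - Sa) * (1 + a i) + a i * Sa := by ring
    rw [key]
    have h1 : |(P - 1 - Sa) * (1 + a i) + a i * Sa|
        ≤ S ^ 2 * Real.exp S * (1 + |a i|) + |a i| * S := by
      calc |(P - 1 - Sa) * (1 + a i) + a i * Sa|
          ≤ |(P - 1 - Sa) * (1 + a i)| + |a i * Sa| := abs_add_le _ _
        _ ≤ S ^ 2 * Real.exp S * (1 + |a i|) + |a i| * S := by
            rw [abs_mul, abs_mul]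
            have hA : |1 + a i| ≤ 1 + |a i| := by
              calc |1 + a i| ≤ |(1:ℝ)| + |a i| := abs_add_le _ _
                _ = 1 + |a i| := by rw [abs_one]
            have hB : (0:ℝ) ≤ 1 + |a i| := by positivity
            gcongr <;> first | exact abs_nonneg _ | exact ih | exact hA | exact hS
    refine h1.trans ?_
    have hb : (0:ℝ) ≤ |a i| := abs_nonneg _
    have he1 : Real.exp S * (1 + |a i|) ≤ Real.exp (|a i| + S) := by
      rw [Real.exp_add]
      have := Real.add_one_le_exp (|a i|)
      nlinarith [Real.exp_pos S]
    have he2 : (1:ℝ) ≤ Real.exp (|a i| + S) := by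
      rw [Real.one_le_exp_iff]; positivity
    have h3 : S^2 * (Real.exp S * (1 + |a i|)) ≤ S^2 * Real.exp (|a i| + S) :=
      mul_le_mul_of_nonneg_left he1 (sq_nonneg S)
    nlinarith [mul_nonneg hb hS0, sq_nonneg (|a i|), Real.exp_pos (|a i| + S),
      mul_nonneg (mul_nonneg hb hS0) (le_of_lt (Real.exp_pos (|a i| + S)))]

lemma aux_pow_diff (u m : ℕ) (hm : 1 ≤ m) :
    (m : ℝ) * (u:ℝ) ^ (m-1) ≤ ((u:ℝ)+1) ^ m - (u:ℝ) ^ m ∧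
    ((u:ℝ)+1) ^ m - (u:ℝ) ^ m ≤ (m:ℝ) * ((u:ℝ)+1) ^ (m-1) := by
  have h := geom_sum₂_mul ((u:ℝ)+1) (u:ℝ) m
  simp only [add_sub_cancel_left, mul_one] at h
  rw [← h]
  have hu0 : (0:ℝ) ≤ (u:ℝ) := Nat.cast_nonneg u
  have hu1 : (u:ℝ) ≤ (u:ℝ) + 1 := by linarith
  constructor
  · calc (m:ℝ) * (u:ℝ)^(m-1) = ∑ _i ∈ range m, (u:ℝ)^(m-1) := by
          rw [Finset.sum_const, card_range, nsmul_eq_mul]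
      _ ≤ ∑ i ∈ range m, ((u:ℝ)+1)^i * (u:ℝ)^(m-1-i) := by
          apply Finset.sum_le_sum
          intro i hi
          have hi' : i < m := mem_range.mp hi
          have he : (u:ℝ)^(m-1) = (u:ℝ)^i * (u:ℝ)^(m-1-i) := by
            rw [← pow_add]; congr 1; omega
          rw [he]
          have : (u:ℝ)^i ≤ ((u:ℝ)+1)^i := by gcongr
          have h2 : (0:ℝ) ≤ (u:ℝ)^(m-1-i) := by positivity
          nlinarith
  · calc (∑ i ∈ range m, ((u:ℝ)+1)^i * (u:ℝ)^(m-1-i))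
        ≤ ∑ _i ∈ range m, ((u:ℝ)+1)^(m-1) := by
          apply Finset.sum_le_sum
          intro i hi
          have hi' : i < m := mem_range.mp hi
          have he : ((u:ℝ)+1)^(m-1) = ((u:ℝ)+1)^i * ((u:ℝ)+1)^(m-1-i) := by
            rw [← pow_add]; congr 1; omega
          rw [he]
          have : (u:ℝ)^(m-1-i) ≤ ((u:ℝ)+1)^(m-1-i) := by gcongr
          have h2 : (0:ℝ) ≤ ((u:ℝ)+1)^i := by positivity
          nlinarith
      _ = (m:ℝ) * ((u:ℝ)+1)^(m-1) := by
          rw [Finset.sum_const, card_range, nsmul_eq_mul]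

lemma aux_sum_pow (s m : ℕ) (hm : 1 ≤ m) :
    |(∑ u ∈ range s, (u:ℝ)^(m-1)) - (s:ℝ)^m / m| ≤ (s:ℝ)^(m-1) := by
  have hmpos : (0:ℝ) < m := by exact_mod_cast hm
  have htel : ∑ u ∈ range s, (((u:ℝ)+1)^m - (u:ℝ)^m) = (s:ℝ)^m := by
    have h := Finset.sum_range_sub (fun u => ((u:ℝ))^m) s
    push_cast at h
    rw [zero_pow (by omega : m ≠ 0), sub_zero] at h
    exact h
  -- lower: m * Σ u^{m-1} ≤ s^m
  have hlow : (m:ℝ) * (∑ u ∈ range s, (u:ℝ)^(m-1)) ≤ (s:ℝ)^m := by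
    rw [Finset.mul_sum, ← htel]
    exact Finset.sum_le_sum fun u _ => (aux_pow_diff u m hm).1
  have hupp : (s:ℝ)^m ≤ (m:ℝ) * (∑ u ∈ range s, (u:ℝ)^(m-1)) + (m:ℝ) * (s:ℝ)^(m-1) := by
    have h1 : (s:ℝ)^m ≤ (m:ℝ) * ∑ u ∈ range s, ((u:ℝ)+1)^(m-1) := by
      rw [Finset.mul_sum, ← htel]
      exact Finset.sum_le_sum fun u _ => (aux_pow_diff u m hm).2
    have h2 : ∑ u ∈ range s, ((u:ℝ)+1)^(m-1)
        ≤ (∑ u ∈ range s, (u:ℝ)^(m-1)) + (s:ℝ)^(m-1) := by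
      have hs1 := Finset.sum_range_succ' (fun u => ((u:ℝ))^(m-1)) s
      have hs2 := Finset.sum_range_succ (fun u => ((u:ℝ))^(m-1)) s
      push_cast at hs1 hs2
      have h0 : (0:ℝ) ≤ (0:ℝ)^(m-1) := by positivity
      linarith
    have hmn : (0:ℝ) ≤ (m:ℝ) := le_of_lt hmpos
    nlinarith
  have e1 : (s:ℝ)^m / m ≤ (∑ u ∈ range s, (u:ℝ)^(m-1)) + (s:ℝ)^(m-1) := by
    rw [div_le_iff₀ hmpos]; nlinarith
  have e2 : (∑ u ∈ range s, (u:ℝ)^(m-1)) ≤ (s:ℝ)^m / m := by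
    rw [le_div_iff₀ hmpos]; nlinarith
  rw [abs_le]
  constructor <;> [linarith; linarith]

lemma aux_two_sq (x y : ℝ) : (x+y)^2 ≤ 2*x^2 + 2*y^2 := by
  nlinarith [sq_nonneg (x - y)]


open Filter Asymptotics

set_option maxHeartbeats 4000000 in
/-- Evolution of the dual recursion for the moment generating function.  Fix `k ≥ r ≥ 2`,
`μ > 0`, `τ > 0` and `λ : ℝ`.  With `ℓ(n) → ∞`, `ℓ(n)/n → 0`, `t = t(n) = ⌊τ·ℓ(n)⌋`,
`N(a) = n - ℓ(n) - a`, and the recursion `λ_{k-r+1}^{(s)} = λ`, `λ_j^{(0)} = 0` and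
`λ_j^{(s)} = λ_j^{(s-1)} + log(1 - j/N(t-s+1) + (j/N(t-s+1))·e^{λ_{j-1}^{(s-1)}})`
for `k-r+2 ≤ j ≤ k`, one has, for each `j ∈ {k-r+1, …, k}`,
`exp(λ_j^{(t)}) = 1 + C(j,k-r+1)·(t/n)^{j-k+r-1}·(e^λ - 1)
  + O(ℓ(n)^{j-k+r-2}/n^{j-k+r-1}·max{1, ℓ(n)²/n})` as `n → ∞`. -/
theorem stmt_16 (k r : ℕ) (hr : 2 ≤ r) (hk : r ≤ k) (μ τ lam0 : ℝ) (hμ : 0 < μ) (hτ : 0 < τ)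
    (ℓ : ℕ → ℕ)
    (hℓ : Tendsto (fun n => (ℓ n : ℝ)) atTop atTop)
    (hℓn : Tendsto (fun n => (ℓ n : ℝ) / n) atTop (nhds 0))
    (t : ℕ → ℕ) (ht : ∀ n, t n = ⌊τ * (ℓ n : ℝ)⌋₊)
    (N : ℕ → ℕ → ℝ) (hN : ∀ n a, N n a = (n : ℝ) - (ℓ n : ℝ) - a)
    (lam : ℕ → ℕ → ℕ → ℝ)
    (hbase : ∀ n s, lam n (k - r + 1) s = lam0)
    (hzero : ∀ n j, k - r + 2 ≤ j → j ≤ k → lam n j 0 = 0)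
    (hrec : ∀ n j s, k - r + 2 ≤ j → j ≤ k → 1 ≤ s →
      lam n j s = lam n j (s - 1) +
        Real.log (1 - (j : ℝ) / N n (t n - s + 1)
          + ((j : ℝ) / N n (t n - s + 1)) * Real.exp (lam n (j - 1) (s - 1)))) :
    ∀ j, k - r + 1 ≤ j → j ≤ k →
      (fun n => Real.exp (lam n j (t n)) -
          (1 + (j.choose (k - r + 1) : ℝ) * ((t n : ℝ) / n) ^ (j - (k - r + 1))
            * (Real.exp lam0 - 1)))
        =O[atTop]
      (fun n => (ℓ n : ℝ) ^ (((j : ℤ) - k + r) - 2) / (n : ℝ) ^ (((j : ℤ) - k + r) - 1)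
          * max 1 ((ℓ n : ℝ) ^ 2 / n)) := by
  intro j hj1 hj2
  set b := k - r + 1 with hb
  obtain ⟨m0, rfl⟩ : ∃ m0, j = b + m0 := ⟨j - b, by omega⟩
  clear_value b
  set B := Real.exp lam0 - 1 with hBdef
  set M : ℕ → ℝ := fun n => max 1 ((ℓ n : ℝ) ^ 2 / n) with hMdef
  have hM1 : ∀ n, (1:ℝ) ≤ M n := fun n => le_max_left _ _
  have hM0 : ∀ n, (0:ℝ) ≤ M n := fun n => le_trans zero_le_one (hM1 n)
  have hMl : ∀ n, (ℓ n:ℝ)^2/n ≤ M n := fun n => le_max_right _ _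
  have htτ : ∀ n, (t n : ℝ) ≤ τ * ℓ n := by
    intro n; rw [ht n]; exact Nat.floor_le (by positivity)
  set cτ : ℝ := max τ 1 with hcτ
  have hcτ1 : (1:ℝ) ≤ cτ := le_max_right _ _
  have hcτ0 : (0:ℝ) ≤ cτ := by linarith
  have hcττ : τ ≤ cτ := le_max_left _ _
  have htcτ : ∀ n, (t n:ℝ) ≤ cτ * ℓ n := by
    intro n
    refine (htτ n).trans ?_
    have h0 : (0:ℝ) ≤ (ℓ n:ℝ) := Nat.cast_nonneg _
    linarith [mul_le_mul_of_nonneg_right hcττ h0]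
  -- M n / n → 0
  have hMn : Tendsto (fun n => M n / n) atTop (nhds 0) := by
    have h1 : Tendsto (fun n : ℕ => 1/(n:ℝ) + ((ℓ n:ℝ)/n) * ((ℓ n:ℝ)/n)) atTop (nhds 0) := by
      have h2 := tendsto_one_div_atTop_nhds_zero_nat.add (hℓn.mul hℓn)
      simpa using h2
    apply squeeze_zero' ?_ ?_ h1
    · filter_upwards [eventually_ge_atTop 1] with n hn
      have hn' : (0:ℝ) < n := by exact_mod_cast hn
      positivity
    · filter_upwards [eventually_ge_atTop 1] with n hn
      have hn' : (0:ℝ) < n := by exact_mod_cast Nat.lt_of_lt_of_le Nat.zero_lt_one hn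
      have hx0 : (0:ℝ) ≤ (ℓ n:ℝ)^2/n := by positivity
      have h3 : M n ≤ 1 + (ℓ n:ℝ)^2/n := max_le (by linarith) (by linarith)
      have h4 : M n / n ≤ (1 + (ℓ n:ℝ)^2/n)/n := by gcongr
      refine h4.trans (le_of_eq ?_)
      field_simp
  clear_value B M cτ
  -- error functional
  set errL : ℕ → ℕ → ℕ → ℝ := fun m' s n =>
    if m' = 0 then 0 else (s:ℝ)^(m'-1) * M n / (n:ℝ)^m' with herrL
  clear_value errL
  have key : ∀ m', b + m' ≤ k →
      ∃ C : ℝ, 0 ≤ C ∧ ∀ᶠ n in atTop, ∀ s, s ≤ t n →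
        |Real.exp (lam n (b + m') s) -
            (1 + (((b + m').choose b : ℕ) : ℝ) * ((s:ℝ)/(n:ℝ)) ^ m' * B)|
          ≤ C * errL m' s n := by
    intro m'
    induction m' with
    | zero =>
      intro _
      refine ⟨0, le_refl _, Eventually.of_forall fun n => ?_⟩
      intro s _
      rw [Nat.add_zero, hbase n s, Nat.choose_self]
      simp only [herrL, if_pos rfl, pow_zero, Nat.cast_one, mul_zero]
      rw [hBdef]
      norm_num
    | succ m ihm =>
      intro hmk
      simp only [← Nat.add_assoc]
      obtain ⟨C₁, hC₁0, hEv₁⟩ := ihm (by omega)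
      set c' : ℝ := (((b+m).choose b : ℕ) : ℝ) with hc'def
      set c : ℝ := (((b+m+1).choose b : ℕ) : ℝ) with hcdef
      have hc'0 : 0 ≤ c' := Nat.cast_nonneg _
      have hc0 : 0 ≤ c := Nat.cast_nonneg _
      have hB0 : (0:ℝ) ≤ |B| := abs_nonneg _
      have hccN : (m+1) * (b+m+1).choose b = (b+m+1) * (b+m).choose b := by
        have h2 : (b+m+1) * (b+m).choose b = (b+m+1).choose (b+1) * (b+1) :=
          Nat.add_one_mul_choose_eq (b+m) b
        have h1 : (b+m+1).choose (b+1) * (b+1) = (b+m+1).choose b * ((b+m+1) - b) :=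
          Nat.choose_succ_right_eq (b+m+1) b
        have h3 : (b+m+1) - b = m + 1 := by omega
        rw [h2, h1, h3, Nat.mul_comm]
      have hcc : ((m:ℝ)+1) * c = ((b+m+1:ℕ):ℝ) * c' := by
        rw [hcdef, hc'def]
        exact_mod_cast hccN
      have hJ0 : (0:ℝ) ≤ ((b+m+1:ℕ):ℝ) := Nat.cast_nonneg _
      set Cδ : ℝ := 2*((b+m+1:ℕ):ℝ)*(1+τ) with hCδdef
      have hCδ0 : 0 ≤ Cδ := by
        rw [hCδdef]
        exact mul_nonneg (by positivity) (by linarith)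
      set KS : ℝ := 2*((b+m+1:ℕ):ℝ)*(c'*|B| * cτ^(m+1) + C₁*cτ^m) + cτ^(m+1) + 1 with hKSdef
      have hterm0 : 0 ≤ 2*((b+m+1:ℕ):ℝ)*(c'*|B| * cτ^(m+1) + C₁*cτ^m) := by
        apply mul_nonneg (by positivity)
        exact add_nonneg (mul_nonneg (mul_nonneg hc'0 hB0) (pow_nonneg hcτ0 _))
          (mul_nonneg hC₁0 (pow_nonneg hcτ0 _))
      have hKS1 : (1:ℝ) ≤ KS := by
        rw [hKSdef]; have := pow_nonneg hcτ0 (m+1); linarith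
      have hKS0 : (0:ℝ) < KS := lt_of_lt_of_le one_pos hKS1
      have hcτKS : ∀ e : ℕ, e ≤ m + 1 → cτ^e ≤ KS := by
        intro e he
        calc cτ^e ≤ cτ^(m+1) := pow_le_pow_right₀ hcτ1 he
          _ ≤ KS := by rw [hKSdef]; linarith [hterm0]
      set CI : ℝ := ((b+m+1:ℕ):ℝ)*c'*|B| + (((b+m+1:ℕ):ℝ)+Cδ)*C₁ + Cδ*c'*|B| * τ with hCIdef
      set CII : ℝ := 24*((b+m+1:ℕ):ℝ)^2*(c'^2*|B|^2*τ^2 + C₁^2) with hCIIdef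
      have hCI0 : 0 ≤ CI := by
        rw [hCIdef]
        have i1 : (0:ℝ) ≤ ((b+m+1:ℕ):ℝ)*c'*|B| := mul_nonneg (mul_nonneg hJ0 hc'0) hB0
        have i2 : (0:ℝ) ≤ (((b+m+1:ℕ):ℝ)+Cδ)*C₁ := mul_nonneg (by linarith) hC₁0
        have i3 : (0:ℝ) ≤ Cδ*c'*|B| * τ :=
          mul_nonneg (mul_nonneg (mul_nonneg hCδ0 hc'0) hB0) (le_of_lt hτ)
        linarith
      have hCII0 : 0 ≤ CII := by rw [hCIIdef]; positivity
      clear_value c' c Cδ KS CI CII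
      refine ⟨CI + CII, by linarith, ?_⟩
      have hev2 : ∀ᶠ n in atTop, (1+τ)*(ℓ n:ℝ) ≤ (n:ℝ)/2 := by
        have hpos : (0:ℝ) < 1/(2*(1+τ)) := by positivity
        filter_upwards [hℓn.eventually (eventually_le_nhds hpos),
          eventually_ge_atTop 1] with n h1 h2
        have hn0 : (0:ℝ) < n := by exact_mod_cast h2
        have h3 : (ℓ n:ℝ) ≤ 1/(2*(1+τ)) * n := (div_le_iff₀ hn0).1 h1
        have h6 : (0:ℝ) < 1+τ := by linarith
        have hne : (1+τ) ≠ 0 := ne_of_gt h6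
        have h4 := mul_le_mul_of_nonneg_left h3 h6.le
        have h5 : (1+τ) * (1/(2*(1+τ)) * n) = n/2 := by
          field_simp
        linarith [h4, h5]
      have hev6 : ∀ᶠ n in atTop, (ℓ n:ℝ)/n + M n/n ≤ 1/KS := by
        have h0 : (0:ℝ) < 1/KS := one_div_pos.mpr hKS0
        have h1 := hℓn.add hMn
        rw [add_zero] at h1
        exact h1.eventually (eventually_le_nhds h0)
      have hev4 : ∀ᶠ n in atTop, (1:ℝ) ≤ (ℓ n:ℝ) := hℓ.eventually_ge_atTop 1
      have hev3 : ∀ᶠ n in atTop, 4*(b+m+1)+4 ≤ n := eventually_ge_atTop _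
      filter_upwards [hEv₁, hev2, hev6, hev4, hev3] with n hIH hP2 hP6 hP4 hP3
      intro s hs
      clear hℓ hℓn hMn hμ hEv₁ hev2 hev6 hev4 hev3
      have hn4 : 4*((b+m+1:ℕ):ℝ)+4 ≤ (n:ℝ) := by exact_mod_cast hP3
      have hn0 : (0:ℝ) < n := by linarith [hJ0]
      have hnne : (n:ℝ) ≠ 0 := ne_of_gt hn0
      have hn1 : (1:ℝ) ≤ n := by linarith [hJ0]
      have hℓ0 : (0:ℝ) ≤ (ℓ n:ℝ) := Nat.cast_nonneg _
      have hℓn1 : (ℓ n:ℝ) ≤ n := by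
        linarith [hP2, mul_nonneg (le_of_lt hτ) hℓ0]
      have hs0 : (0:ℝ) ≤ (s:ℝ) := Nat.cast_nonneg _
      have hst : (s:ℝ) ≤ (t n:ℝ) := by exact_mod_cast hs
      have hsτ : (s:ℝ) ≤ τ * ℓ n := hst.trans (htτ n)
      have hscτ : (s:ℝ) ≤ cτ * ℓ n := hst.trans (htcτ n)
      have hsn : (s:ℝ) ≤ n := by linarith [hP2, hsτ, hℓ0]
      set q : ℝ := (s:ℝ)/(n:ℝ) with hqdef
      set L : ℝ := (ℓ n:ℝ)/(n:ℝ) with hLdef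
      set w : ℝ := M n/(n:ℝ) with hwdef
      clear_value q L w
      have hq0 : 0 ≤ q := by rw [hqdef]; positivity
      have hL0 : 0 ≤ L := by rw [hLdef]; positivity
      have hw0 : 0 < w := by rw [hwdef]; exact div_pos (lt_of_lt_of_le one_pos (hM1 n)) hn0
      have hq1 : q ≤ 1 := by rw [hqdef, div_le_one hn0]; exact hsn
      have hL1 : L ≤ 1 := by rw [hLdef, div_le_one hn0]; exact hℓn1
      have hqτL : q ≤ τ * L := by
        rw [hqdef, hLdef, ← mul_div_assoc]
        exact (div_le_div_iff_of_pos_right hn0).mpr hsτ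
      have hqcτL : q ≤ cτ * L := by
        rw [hqdef, hLdef, ← mul_div_assoc]
        exact (div_le_div_iff_of_pos_right hn0).mpr hscτ
      have hqcτ : q ≤ cτ := by
        calc q ≤ cτ * L := hqcτL
          _ ≤ cτ * 1 := mul_le_mul_of_nonneg_left hL1 hcτ0
          _ = cτ := mul_one cτ
      have hL2w : L^2 ≤ w := by
        rw [hLdef, hwdef, div_pow]
        rw [div_le_div_iff₀ (by positivity) hn0]
        have h1 := hMl n
        rw [div_le_iff₀ hn0] at h1
        linarith [mul_le_mul_of_nonneg_right h1 (le_of_lt hn0)]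
      have h1nw : 1/(n:ℝ) ≤ w := by
        rw [hwdef]
        gcongr
        exact hM1 n
      have hLKS : L ≤ 1/KS := by linarith [hw0]
      have hwKS : w ≤ 1/KS := by linarith [hL0]
      -- facts about the denominators
      have hD : ∀ u : ℕ, (n:ℝ)/2 ≤ N n (t n - u) ∧ N n (t n - u) ≤ n := by
        intro u
        rw [hN]
        have h1 : ((t n - u : ℕ):ℝ) ≤ τ * ℓ n := by
          calc ((t n - u : ℕ):ℝ) ≤ (t n:ℝ) := by exact_mod_cast Nat.sub_le _ _
            _ ≤ τ * ℓ n := htτ n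
        have h2 : (0:ℝ) ≤ ((t n - u : ℕ):ℝ) := Nat.cast_nonneg _
        constructor
        · linarith [hP2]
        · linarith
      have hD0 : ∀ u : ℕ, 0 < N n (t n - u) := by
        intro u
        have := (hD u).1
        linarith
      have hpf : ∀ u : ℕ, 0 ≤ ((b+m+1:ℕ):ℝ) / N n (t n - u) ∧
          ((b+m+1:ℕ):ℝ) / N n (t n - u) ≤ 2*((b+m+1:ℕ):ℝ)/n ∧
          ((b+m+1:ℕ):ℝ) / N n (t n - u) ≤ 1/2 := by
        intro u
        have h1 := (hD u).1
        have h2 := hD0 u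
        have h2D : (n:ℝ) ≤ 2 * N n (t n - u) := by linarith
        refine ⟨div_nonneg hJ0 (le_of_lt h2), ?_, ?_⟩
        · rw [div_le_div_iff₀ h2 hn0]
          linarith [mul_le_mul_of_nonneg_left h2D hJ0]
        · rw [div_le_div_iff₀ h2 two_pos]
          linarith
      set E : ℕ → ℝ := fun u => Real.exp (lam n (b+m) u) with hEdef
      have hEpos : ∀ u, 0 < E u := by
        intro u
        rw [hEdef]
        exact Real.exp_pos _
      set a : ℕ → ℝ := fun u => (((b+m+1:ℕ):ℝ) / N n (t n - u)) * (E u - 1) with hadef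
      clear_value E a
      have hapos : ∀ u, 0 < 1 + a u := by
        intro u
        have h1 := (hpf u).1
        have h2 := (hpf u).2.2
        have h3 := hEpos u
        simp only [hadef]
        linarith [mul_nonneg h1 (le_of_lt h3)]
      have hprod : ∀ s', s' ≤ t n →
          Real.exp (lam n (b+m+1) s') = ∏ u ∈ Finset.range s', (1 + a u) := by
        intro s'
        induction s' with
        | zero =>
          intro _
          rw [Finset.range_zero, Finset.prod_empty, hzero n (b+m+1) (by omega) (by omega)]
          exact Real.exp_zero
        | succ p ihp =>
          intro hp1
          have hple : p ≤ t n := by omega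
          have hr := hrec n (b+m+1) (p+1) (by omega) (by omega) (by omega)
          have hidx : t n - (p+1) + 1 = t n - p := by omega
          rw [hidx] at hr
          simp only [Nat.add_sub_cancel] at hr
          have hx : (1 : ℝ) - ((b+m+1:ℕ):ℝ) / N n (t n - p)
              + ((b+m+1:ℕ):ℝ) / N n (t n - p) * Real.exp (lam n (b+m) p) = 1 + a p := by
            simp only [hadef, hEdef]
            ring
          rw [hr, hx, Real.exp_add, Real.exp_log (hapos p), Finset.prod_range_succ, ihp hple]
      -- refined bound on E u - 1
      have hIH' : ∀ u, u ≤ t n → |E u - 1 - c'*((u:ℝ)/n)^m*B| ≤ C₁ * errL m u n := by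
        intro u hu
        have h := hIH u hu
        simp only [hEdef]
        have he : Real.exp (lam n (b+m) u) - (1 + c'*((u:ℝ)/n)^m*B)
            = Real.exp (lam n (b+m) u) - 1 - c'*((u:ℝ)/n)^m*B := by ring
        rw [← he]
        exact h
      have hEb : ∀ u, u ≤ t n → |E u - 1| ≤ c'*|B| * ((u:ℝ)/n)^m + C₁*errL m u n := by
        intro u hu
        have h2 : |c'*((u:ℝ)/n)^m*B| = c'*|B| * ((u:ℝ)/n)^m := by
          rw [abs_mul, abs_mul, abs_of_nonneg hc'0,
            abs_of_nonneg (by positivity : (0:ℝ) ≤ ((u:ℝ)/n)^m)]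
          ring
        calc |E u - 1| = |(E u - 1 - c'*((u:ℝ)/n)^m*B) + c'*((u:ℝ)/n)^m*B| := by
              rw [sub_add_cancel]
          _ ≤ |E u - 1 - c'*((u:ℝ)/n)^m*B| + |c'*((u:ℝ)/n)^m*B| := abs_add_le _ _
          _ ≤ C₁*errL m u n + c'*|B| * ((u:ℝ)/n)^m := by
              rw [h2]
              exact add_le_add (hIH' u hu) le_rfl
          _ = c'*|B| * ((u:ℝ)/n)^m + C₁*errL m u n := by ring
      -- delta bound
      have hδ : ∀ u : ℕ, |((b+m+1:ℕ):ℝ)/N n (t n - u) - ((b+m+1:ℕ):ℝ)/n| ≤ Cδ * L / n := by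
        intro u
        have hD1 := (hD u).1
        have hD2 := (hD u).2
        have hDpos := hD0 u
        have hid : ((b+m+1:ℕ):ℝ)/N n (t n - u) - ((b+m+1:ℕ):ℝ)/n
            = ((b+m+1:ℕ):ℝ) * ((n:ℝ) - N n (t n - u))/(N n (t n - u) * n) := by
          field_simp
        rw [hid, abs_div, abs_mul]
        have hnum1 : (0:ℝ) ≤ (n:ℝ) - N n (t n - u) := by linarith
        have hnum2 : (n:ℝ) - N n (t n - u) ≤ (1+τ) * ℓ n := by
          rw [hN]
          have h1 : ((t n - u:ℕ):ℝ) ≤ τ * ℓ n := by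
            calc ((t n - u:ℕ):ℝ) ≤ (t n:ℝ) := by exact_mod_cast Nat.sub_le _ _
              _ ≤ τ * ℓ n := htτ n
          linarith
        rw [abs_of_nonneg hJ0, abs_of_nonneg hnum1,
          abs_of_nonneg (mul_nonneg (le_of_lt hDpos) (le_of_lt hn0))]
        rw [div_le_div_iff₀ (mul_pos hDpos hn0) hn0]
        have hLn : L * n = (ℓ n:ℝ) := by rw [hLdef]; field_simp
        have hn2D : (n:ℝ) ≤ 2 * N n (t n - u) := by linarith
        calc ((b+m+1:ℕ):ℝ) * ((n:ℝ) - N n (t n - u)) * n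
            ≤ ((b+m+1:ℕ):ℝ) * ((1+τ) * ℓ n) * n :=
              mul_le_mul_of_nonneg_right (mul_le_mul_of_nonneg_left hnum2 hJ0) (le_of_lt hn0)
          _ ≤ ((b+m+1:ℕ):ℝ) * ((1+τ) * ℓ n) * (2 * N n (t n - u)) := by
              apply mul_le_mul_of_nonneg_left hn2D
              exact mul_nonneg hJ0 (mul_nonneg (by linarith) hℓ0)
          _ = Cδ * L * (N n (t n - u) * n) := by
              rw [hCδdef, ← hLn]
              ring
      -- sum bounds
      have hsum_q : ∑ u ∈ Finset.range s, ((u:ℝ)/n)^m ≤ q^(m+1) * n := by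
        have h1 : ∀ u ∈ Finset.range s, ((u:ℝ)/n)^m ≤ q^m := by
          intro u hu
          have hus : (u:ℝ) ≤ (s:ℝ) := by
            exact_mod_cast le_of_lt (Finset.mem_range.mp hu)
          have h2 : (u:ℝ)/n ≤ q := by
            rw [hqdef]
            exact (div_le_div_iff_of_pos_right hn0).mpr hus
          exact pow_le_pow_left₀ (by positivity) h2 m
        calc ∑ u ∈ Finset.range s, ((u:ℝ)/n)^m ≤ (Finset.range s).card • q^m :=
              Finset.sum_le_card_nsmul _ _ _ h1
          _ = (s:ℝ) * q^m := by rw [Finset.card_range, nsmul_eq_mul]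
          _ = q^(m+1) * n := by
              rw [hqdef, div_pow, div_pow, pow_succ]
              field_simp
              ring
      have hsum_err : ∑ u ∈ Finset.range s, errL m u n ≤ q^m*w*n := by
        rcases Nat.eq_zero_or_pos m with hm | hm
        · subst hm
          rw [Finset.sum_eq_zero (fun u _ => by simp [herrL])]
          rw [pow_zero, one_mul]
          exact mul_nonneg (le_of_lt hw0) (le_of_lt hn0)
        · have hb1 : ∀ u ∈ Finset.range s, errL m u n ≤ (s:ℝ)^(m-1)*M n/(n:ℝ)^m := by
            intro u hu
            simp only [herrL, if_neg (by omega : ¬ m = 0)]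
            have hus : (u:ℝ) ≤ (s:ℝ) := by
              exact_mod_cast le_of_lt (Finset.mem_range.mp hu)
            have h1 : (u:ℝ)^(m-1) ≤ (s:ℝ)^(m-1) := pow_le_pow_left₀ (Nat.cast_nonneg _) hus _
            have h2 := mul_le_mul_of_nonneg_right h1 (hM0 n)
            exact (div_le_div_iff_of_pos_right (pow_pos hn0 m)).mpr h2
          calc ∑ u ∈ Finset.range s, errL m u n
              ≤ (Finset.range s).card • ((s:ℝ)^(m-1)*M n/(n:ℝ)^m) :=
                Finset.sum_le_card_nsmul _ _ _ hb1
            _ = (s:ℝ)*((s:ℝ)^(m-1)*M n/(n:ℝ)^m) := by rw [Finset.card_range, nsmul_eq_mul]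
            _ = (s:ℝ)^(m-1+1)*M n/(n:ℝ)^m := by rw [pow_succ]; ring
            _ = q^m*w*n := by
                rw [show m-1+1 = m by omega, hqdef, hwdef, div_pow]
                field_simp
      -- the rho decomposition
      set ρ : ℕ → ℝ := fun u =>
        a u - (((b+m+1:ℕ):ℝ)*c'*B/(n:ℝ)^(m+1)) * (u:ℝ)^m with hρdef
      clear_value ρ
      have hρbound : ∀ u ∈ Finset.range s, |ρ u| ≤
          ((((b+m+1:ℕ):ℝ) + Cδ*L)/n*C₁)*errL m u n + (Cδ*L/n*(c'*|B|))*((u:ℝ)/n)^m := by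
        intro u hu
        have hu' : u ≤ t n := by
          have := Finset.mem_range.mp hu
          omega
        have hrwρ : ρ u = (((b+m+1:ℕ):ℝ)/n)*(E u - 1 - c'*((u:ℝ)/n)^m*B)
            + (((b+m+1:ℕ):ℝ)/N n (t n - u) - ((b+m+1:ℕ):ℝ)/n)*(E u - 1) := by
          simp only [hρdef, hadef]
          have hDne : N n (t n - u) ≠ 0 := ne_of_gt (hD0 u)
          rw [div_pow]; field_simp
          ring
        rw [hrwρ]
        have hf1 : |(((b+m+1:ℕ):ℝ)/n)*(E u - 1 - c'*((u:ℝ)/n)^m*B)|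
            ≤ (((b+m+1:ℕ):ℝ)/n)*(C₁*errL m u n) := by
          rw [abs_mul, abs_of_nonneg (div_nonneg hJ0 (le_of_lt hn0))]
          exact mul_le_mul_of_nonneg_left (hIH' u hu') (div_nonneg hJ0 (le_of_lt hn0))
        have hf2 : |(((b+m+1:ℕ):ℝ)/N n (t n - u) - ((b+m+1:ℕ):ℝ)/n)*(E u - 1)|
            ≤ (Cδ*L/n)*(c'*|B| * ((u:ℝ)/n)^m + C₁*errL m u n) := by
          rw [abs_mul]
          apply mul_le_mul (hδ u) (hEb u hu') (abs_nonneg _)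
          exact div_nonneg (mul_nonneg hCδ0 hL0) (le_of_lt hn0)
        calc |(((b+m+1:ℕ):ℝ)/n)*(E u - 1 - c'*((u:ℝ)/n)^m*B)
              + (((b+m+1:ℕ):ℝ)/N n (t n - u) - ((b+m+1:ℕ):ℝ)/n)*(E u - 1)|
            ≤ |(((b+m+1:ℕ):ℝ)/n)*(E u - 1 - c'*((u:ℝ)/n)^m*B)|
              + |(((b+m+1:ℕ):ℝ)/N n (t n - u) - ((b+m+1:ℕ):ℝ)/n)*(E u - 1)| := abs_add_le _ _
          _ ≤ (((b+m+1:ℕ):ℝ)/n)*(C₁*errL m u n)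
              + (Cδ*L/n)*(c'*|B| * ((u:ℝ)/n)^m + C₁*errL m u n) := add_le_add hf1 hf2
          _ = ((((b+m+1:ℕ):ℝ) + Cδ*L)/n*C₁)*errL m u n + (Cδ*L/n*(c'*|B|))*((u:ℝ)/n)^m := by
              ring
      have herrnn : ∀ u, 0 ≤ errL m u n := by
        intro u
        simp only [herrL]
        split
        · exact le_refl _
        · have := hM0 n
          positivity
      have hsum_ρ : |∑ u ∈ Finset.range s, ρ u| ≤
          ((((b+m+1:ℕ):ℝ) + Cδ*L)*C₁)*(q^m*w) + (Cδ*c'*|B|)*(L*q^(m+1)) := by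
        have hcoef1 : (0:ℝ) ≤ (((b+m+1:ℕ):ℝ) + Cδ*L)/n*C₁ :=
          mul_nonneg (div_nonneg (add_nonneg hJ0 (mul_nonneg hCδ0 hL0)) (le_of_lt hn0)) hC₁0
        have hcoef2 : (0:ℝ) ≤ Cδ*L/n*(c'*|B|) :=
          mul_nonneg (div_nonneg (mul_nonneg hCδ0 hL0) (le_of_lt hn0)) (mul_nonneg hc'0 hB0)
        calc |∑ u ∈ Finset.range s, ρ u| ≤ ∑ u ∈ Finset.range s, |ρ u| :=
              Finset.abs_sum_le_sum_abs _ _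
          _ ≤ ∑ u ∈ Finset.range s, (((((b+m+1:ℕ):ℝ) + Cδ*L)/n*C₁)*errL m u n
                + (Cδ*L/n*(c'*|B|))*((u:ℝ)/n)^m) := Finset.sum_le_sum hρbound
          _ = ((((b+m+1:ℕ):ℝ) + Cδ*L)/n*C₁)*(∑ u ∈ Finset.range s, errL m u n)
              + (Cδ*L/n*(c'*|B|))*(∑ u ∈ Finset.range s, ((u:ℝ)/n)^m) := by
              rw [Finset.sum_add_distrib, ← Finset.mul_sum, ← Finset.mul_sum]
          _ ≤ ((((b+m+1:ℕ):ℝ) + Cδ*L)/n*C₁)*(q^m*w*n)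
              + (Cδ*L/n*(c'*|B|))*(q^(m+1)*n) :=
              add_le_add (mul_le_mul_of_nonneg_left hsum_err hcoef1)
                (mul_le_mul_of_nonneg_left hsum_q hcoef2)
          _ = ((((b+m+1:ℕ):ℝ) + Cδ*L)*C₁)*(q^m*w) + (Cδ*c'*|B|)*(L*q^(m+1)) := by
              field_simp
      -- Part I : sum estimate
      have hsum_a : |(∑ u ∈ Finset.range s, a u) - c*q^(m+1)*B| ≤ CI * (q^m*w) := by
        have hm1ne : ((m:ℝ)+1) ≠ 0 := by positivity
        have hcc' : c = ((b+m+1:ℕ):ℝ)*c'/((m:ℝ)+1) := by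
          rw [eq_div_iff hm1ne]
          linarith [hcc]
        have hcoef : c*q^(m+1)*B
            = (((b+m+1:ℕ):ℝ)*c'*B/(n:ℝ)^(m+1)) * ((s:ℝ)^(m+1)/((m:ℝ)+1)) := by
          rw [hcc', hqdef, div_pow]
          field_simp
        have h1 : (∑ u ∈ Finset.range s, ρ u)
            = (∑ u ∈ Finset.range s, a u)
              - (((b+m+1:ℕ):ℝ)*c'*B/(n:ℝ)^(m+1)) * (∑ u ∈ Finset.range s, (u:ℝ)^m) := by
          rw [Finset.mul_sum, ← Finset.sum_sub_distrib]
          apply Finset.sum_congr rfl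
          intro u _
          simp only [hρdef]
        have hsplit : (∑ u ∈ Finset.range s, a u) - c*q^(m+1)*B
            = (((b+m+1:ℕ):ℝ)*c'*B/(n:ℝ)^(m+1))
                * ((∑ u ∈ Finset.range s, (u:ℝ)^m) - (s:ℝ)^(m+1)/((m:ℝ)+1))
              + ∑ u ∈ Finset.range s, ρ u := by
          rw [h1, hcoef]
          ring
        have hsp := aux_sum_pow s (m+1) (by omega)
        simp only [Nat.add_sub_cancel] at hsp
        push_cast at hsp
        have hcoefabs : |((b+m+1:ℕ):ℝ)*c'*B/(n:ℝ)^(m+1)|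
            = ((b+m+1:ℕ):ℝ)*c'*|B|/(n:ℝ)^(m+1) := by
          rw [abs_div, abs_mul, abs_mul, abs_of_nonneg hJ0, abs_of_nonneg hc'0,
            abs_of_nonneg (pow_nonneg (le_of_lt hn0) (m+1))]
        have habs1 : |(((b+m+1:ℕ):ℝ)*c'*B/(n:ℝ)^(m+1))
              * ((∑ u ∈ Finset.range s, (u:ℝ)^m) - (s:ℝ)^(m+1)/((m:ℝ)+1))|
            ≤ (((b+m+1:ℕ):ℝ)*c'*|B|/(n:ℝ)^(m+1)) * (s:ℝ)^m := by
          rw [abs_mul, hcoefabs]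
          apply mul_le_mul_of_nonneg_left hsp
          exact div_nonneg (mul_nonneg (mul_nonneg hJ0 hc'0) hB0)
            (pow_nonneg (le_of_lt hn0) (m+1))
        have hb1 : (((b+m+1:ℕ):ℝ)*c'*|B|/(n:ℝ)^(m+1))*(s:ℝ)^m
            ≤ (((b+m+1:ℕ):ℝ)*c'*|B|)*(q^m*w) := by
          have heq : (((b+m+1:ℕ):ℝ)*c'*|B|/(n:ℝ)^(m+1))*(s:ℝ)^m
              = (((b+m+1:ℕ):ℝ)*c'*|B|)*(q^m*(1/n)) := by
            rw [hqdef, div_pow, pow_succ]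
            field_simp
            try ring
          rw [heq]
          apply mul_le_mul_of_nonneg_left _ (mul_nonneg (mul_nonneg hJ0 hc'0) hB0)
          exact mul_le_mul_of_nonneg_left h1nw (pow_nonneg hq0 m)
        have hb2 : ((((b+m+1:ℕ):ℝ) + Cδ*L)*C₁)*(q^m*w)
            ≤ ((((b+m+1:ℕ):ℝ) + Cδ)*C₁)*(q^m*w) := by
          apply mul_le_mul_of_nonneg_right _ (mul_nonneg (pow_nonneg hq0 m) (le_of_lt hw0))
          apply mul_le_mul_of_nonneg_right _ hC₁0
          linarith [mul_le_mul_of_nonneg_left hL1 hCδ0]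
        have hLq : L*q ≤ τ*w := by
          have i1 : L*q ≤ L*(τ*L) := mul_le_mul_of_nonneg_left hqτL hL0
          have i2 : τ*L^2 ≤ τ*w := mul_le_mul_of_nonneg_left hL2w (le_of_lt hτ)
          linarith [i1, i2]
        have hb3 : (Cδ*c'*|B|)*(L*q^(m+1)) ≤ (Cδ*c'*|B| * τ)*(q^m*w) := by
          have h2 : L*q^(m+1) = (L*q)*q^m := by ring
          have h3 : (L*q)*q^m ≤ (τ*w)*q^m := mul_le_mul_of_nonneg_right hLq (pow_nonneg hq0 m)
          calc (Cδ*c'*|B|)*(L*q^(m+1)) = (Cδ*c'*|B|)*((L*q)*q^m) := by rw [h2]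
            _ ≤ (Cδ*c'*|B|)*((τ*w)*q^m) :=
                mul_le_mul_of_nonneg_left h3 (mul_nonneg (mul_nonneg hCδ0 hc'0) hB0)
            _ = (Cδ*c'*|B| * τ)*(q^m*w) := by ring
        calc |(∑ u ∈ Finset.range s, a u) - c*q^(m+1)*B|
            = |(((b+m+1:ℕ):ℝ)*c'*B/(n:ℝ)^(m+1))
                * ((∑ u ∈ Finset.range s, (u:ℝ)^m) - (s:ℝ)^(m+1)/((m:ℝ)+1))
                + ∑ u ∈ Finset.range s, ρ u| := by rw [hsplit]
          _ ≤ |(((b+m+1:ℕ):ℝ)*c'*B/(n:ℝ)^(m+1))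
                * ((∑ u ∈ Finset.range s, (u:ℝ)^m) - (s:ℝ)^(m+1)/((m:ℝ)+1))|
              + |∑ u ∈ Finset.range s, ρ u| := abs_add_le _ _
          _ ≤ (((b+m+1:ℕ):ℝ)*c'*|B|/(n:ℝ)^(m+1)) * (s:ℝ)^m
              + (((((b+m+1:ℕ):ℝ) + Cδ*L)*C₁)*(q^m*w) + (Cδ*c'*|B|)*(L*q^(m+1))) :=
              add_le_add habs1 hsum_ρ
          _ ≤ (((b+m+1:ℕ):ℝ)*c'*|B|)*(q^m*w)
              + (((((b+m+1:ℕ):ℝ) + Cδ)*C₁)*(q^m*w) + (Cδ*c'*|B| * τ)*(q^m*w)) :=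
              add_le_add hb1 (add_le_add hb2 hb3)
          _ = CI*(q^m*w) := by rw [hCIdef]; ring
      -- Part II : product linearization
      have hSAb : (∑ u ∈ Finset.range s, |a u|)
          ≤ 2*((b+m+1:ℕ):ℝ)*c'*|B| * q^(m+1) + 2*((b+m+1:ℕ):ℝ)*C₁*(q^m*w) := by
        have h1 : ∀ u ∈ Finset.range s, |a u| ≤
            (2*((b+m+1:ℕ):ℝ)/n)*(c'*|B| * ((u:ℝ)/n)^m + C₁*errL m u n) := by
          intro u hu
          have hu' : u ≤ t n := by
            have := Finset.mem_range.mp hu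
            omega
          have harw : |a u| = (((b+m+1:ℕ):ℝ)/N n (t n - u)) * |E u - 1| := by
            simp only [hadef]
            rw [abs_mul, abs_of_nonneg (hpf u).1]
          rw [harw]
          apply mul_le_mul (hpf u).2.1 (hEb u hu') (abs_nonneg _)
          exact div_nonneg (by linarith [hJ0]) (le_of_lt hn0)
        calc (∑ u ∈ Finset.range s, |a u|)
            ≤ ∑ u ∈ Finset.range s,
                ((2*((b+m+1:ℕ):ℝ)/n)*(c'*|B| * ((u:ℝ)/n)^m + C₁*errL m u n)) :=
              Finset.sum_le_sum h1
          _ = (2*((b+m+1:ℕ):ℝ)/n)*(c'*|B| * (∑ u ∈ Finset.range s, ((u:ℝ)/n)^m)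
              + C₁*(∑ u ∈ Finset.range s, errL m u n)) := by
              rw [← Finset.mul_sum, Finset.sum_add_distrib, ← Finset.mul_sum, ← Finset.mul_sum]
          _ ≤ (2*((b+m+1:ℕ):ℝ)/n)*(c'*|B| * (q^(m+1)*n) + C₁*(q^m*w*n)) := by
              apply mul_le_mul_of_nonneg_left _ (div_nonneg (by linarith [hJ0]) (le_of_lt hn0))
              exact add_le_add (mul_le_mul_of_nonneg_left hsum_q (mul_nonneg hc'0 hB0))
                (mul_le_mul_of_nonneg_left hsum_err hC₁0)
          _ = 2*((b+m+1:ℕ):ℝ)*c'*|B| * q^(m+1) + 2*((b+m+1:ℕ):ℝ)*C₁*(q^m*w) := by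
              field_simp
      set SA : ℝ := ∑ u ∈ Finset.range s, |a u| with hSAdef
      have hSA0 : 0 ≤ SA := Finset.sum_nonneg fun _ _ => abs_nonneg _
      clear_value SA
      have hc1 : (0:ℝ) ≤ 2*((b+m+1:ℕ):ℝ)*c'*|B| :=
        mul_nonneg (mul_nonneg (by linarith [hJ0]) hc'0) hB0
      have hc2 : (0:ℝ) ≤ 2*((b+m+1:ℕ):ℝ)*C₁ := mul_nonneg (by linarith [hJ0]) hC₁0
      have hq_cτL : q^(m+1) ≤ cτ^(m+1)*L := by
        calc q^(m+1) ≤ (cτ*L)^(m+1) := pow_le_pow_left₀ hq0 hqcτL _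
          _ = cτ^(m+1)*L^(m+1) := mul_pow _ _ _
          _ ≤ cτ^(m+1)*L := by
              have hLp : L^(m+1) ≤ L := pow_le_of_le_one hL0 hL1 (by omega)
              exact mul_le_mul_of_nonneg_left hLp (pow_nonneg hcτ0 _)
      have hqm_cτ : q^m ≤ cτ^m := pow_le_pow_left₀ hq0 hqcτ m
      have hSA1 : SA ≤ 1 := by
        have e1 : 2*((b+m+1:ℕ):ℝ)*c'*|B| * q^(m+1)
            ≤ 2*((b+m+1:ℕ):ℝ)*c'*|B| * (cτ^(m+1)*(1/KS)) := by
          apply mul_le_mul_of_nonneg_left _ hc1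
          calc q^(m+1) ≤ cτ^(m+1)*L := hq_cτL
            _ ≤ cτ^(m+1)*(1/KS) := mul_le_mul_of_nonneg_left hLKS (pow_nonneg hcτ0 _)
        have e2 : 2*((b+m+1:ℕ):ℝ)*C₁*(q^m*w) ≤ 2*((b+m+1:ℕ):ℝ)*C₁*(cτ^m*(1/KS)) := by
          apply mul_le_mul_of_nonneg_left _ hc2
          exact mul_le_mul hqm_cτ hwKS (le_of_lt hw0) (pow_nonneg hcτ0 _)
        have e3 : 2*((b+m+1:ℕ):ℝ)*c'*|B| * (cτ^(m+1)*(1/KS)) + 2*((b+m+1:ℕ):ℝ)*C₁*(cτ^m*(1/KS))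
            = (2*((b+m+1:ℕ):ℝ)*(c'*|B| * cτ^(m+1) + C₁*cτ^m))*(1/KS) := by ring
        have e4 : (2*((b+m+1:ℕ):ℝ)*(c'*|B| * cτ^(m+1) + C₁*cτ^m))*(1/KS) ≤ KS*(1/KS) := by
          apply mul_le_mul_of_nonneg_right _ (by positivity)
          rw [hKSdef]
          have := pow_nonneg hcτ0 (m+1)
          linarith
        have e5 : KS*(1/KS) = 1 := mul_one_div_cancel (ne_of_gt hKS0)
        linarith [hSAb]
      have hqmw1 : q^m * w ≤ 1 := by
        have h1 : q^m ≤ cτ^m := hqm_cτ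
        have h2 : cτ^m ≤ KS := hcτKS m (by omega)
        calc q^m * w ≤ KS * (1/KS) :=
              mul_le_mul (h1.trans h2) hwKS (le_of_lt hw0) (le_of_lt hKS0)
          _ = 1 := mul_one_div_cancel (ne_of_gt hKS0)
      have hq2 : q^2 ≤ τ^2*w := by
        have h1 : q^2 ≤ (τ*L)^2 := pow_le_pow_left₀ hq0 hqτL 2
        linarith [h1, mul_le_mul_of_nonneg_left hL2w (sq_nonneg τ)]
      have hprod2 : |(∏ u ∈ Finset.range s, (1 + a u)) - 1 - ∑ u ∈ Finset.range s, a u|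
          ≤ CII * (q^m*w) := by
        have h0 := aux_prod (Finset.range s) a
        rw [← hSAdef] at h0
        have hexp : Real.exp SA ≤ 3 := by
          calc Real.exp SA ≤ Real.exp 1 := Real.exp_le_exp.2 hSA1
            _ ≤ 3 := by linarith [Real.exp_one_lt_d9]
        have hSAb' : SA ≤ 2*((b+m+1:ℕ):ℝ)*c'*|B| * q^(m+1) + 2*((b+m+1:ℕ):ℝ)*C₁*(q^m*w) :=
          hSAb
        have hX0 : (0:ℝ) ≤ 2*((b+m+1:ℕ):ℝ)*c'*|B| * q^(m+1) :=
          mul_nonneg hc1 (pow_nonneg hq0 _)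
        have hY0 : (0:ℝ) ≤ 2*((b+m+1:ℕ):ℝ)*C₁*(q^m*w) :=
          mul_nonneg hc2 (mul_nonneg (pow_nonneg hq0 _) (le_of_lt hw0))
        have hsq : SA^2 ≤ 2*(2*((b+m+1:ℕ):ℝ)*c'*|B| * q^(m+1))^2
            + 2*(2*((b+m+1:ℕ):ℝ)*C₁*(q^m*w))^2 := by
          have t1 : SA^2 ≤ (2*((b+m+1:ℕ):ℝ)*c'*|B| * q^(m+1)
              + 2*((b+m+1:ℕ):ℝ)*C₁*(q^m*w))^2 := pow_le_pow_left₀ hSA0 hSAb' 2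
          have t2 := aux_two_sq (2*((b+m+1:ℕ):ℝ)*c'*|B| * q^(m+1))
            (2*((b+m+1:ℕ):ℝ)*C₁*(q^m*w))
          linarith [t1, t2]
        have h3 : (q^(m+1))^2 ≤ τ^2*(q^m*w) := by
          have hqm1 : q^m ≤ 1 := pow_le_one₀ hq0 hq1
          have s1 : q^m*q^m ≤ q^m := by
            linarith [mul_le_mul_of_nonneg_left hqm1 (pow_nonneg hq0 m)]
          have s2 : q^m*q^m*q^2 ≤ q^m*q^2 := mul_le_mul_of_nonneg_right s1 (sq_nonneg q)
          have s3 : q^m*q^2 ≤ q^m*(τ^2*w) := mul_le_mul_of_nonneg_left hq2 (pow_nonneg hq0 m)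
          calc (q^(m+1))^2 = q^m*q^m*q^2 := by ring
            _ ≤ q^m*q^2 := s2
            _ ≤ q^m*(τ^2*w) := s3
            _ = τ^2*(q^m*w) := by ring
        have hX2 : (2*((b+m+1:ℕ):ℝ)*c'*|B| * q^(m+1))^2
            ≤ 4*((b+m+1:ℕ):ℝ)^2*c'^2*|B|^2*(τ^2*(q^m*w)) := by
          calc (2*((b+m+1:ℕ):ℝ)*c'*|B| * q^(m+1))^2
              = 4*((b+m+1:ℕ):ℝ)^2*c'^2*|B|^2*((q^(m+1))^2) := by ring
            _ ≤ 4*((b+m+1:ℕ):ℝ)^2*c'^2*|B|^2*(τ^2*(q^m*w)) := by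
                apply mul_le_mul_of_nonneg_left h3
                positivity
        have hY2 : (2*((b+m+1:ℕ):ℝ)*C₁*(q^m*w))^2 ≤ 4*((b+m+1:ℕ):ℝ)^2*C₁^2*(q^m*w) := by
          have h1 : (q^m*w)^2 ≤ q^m*w := by
            have := mul_le_mul_of_nonneg_left hqmw1
              (mul_nonneg (pow_nonneg hq0 m) (le_of_lt hw0))
            linarith [this]
          calc (2*((b+m+1:ℕ):ℝ)*C₁*(q^m*w))^2
              = 4*((b+m+1:ℕ):ℝ)^2*C₁^2*((q^m*w)^2) := by ring
            _ ≤ 4*((b+m+1:ℕ):ℝ)^2*C₁^2*(q^m*w) := by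
                apply mul_le_mul_of_nonneg_left h1
                positivity
        calc |(∏ u ∈ Finset.range s, (1 + a u)) - 1 - ∑ u ∈ Finset.range s, a u|
            ≤ SA^2 * Real.exp SA := h0
          _ ≤ SA^2 * 3 := mul_le_mul_of_nonneg_left hexp (sq_nonneg SA)
          _ ≤ (2*(2*((b+m+1:ℕ):ℝ)*c'*|B| * q^(m+1))^2
              + 2*(2*((b+m+1:ℕ):ℝ)*C₁*(q^m*w))^2) * 3 :=
              mul_le_mul_of_nonneg_right hsq (by norm_num)
          _ ≤ (2*(4*((b+m+1:ℕ):ℝ)^2*c'^2*|B|^2*(τ^2*(q^m*w)))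
              + 2*(4*((b+m+1:ℕ):ℝ)^2*C₁^2*(q^m*w))) * 3 := by
              have h4 := add_le_add (mul_le_mul_of_nonneg_left hX2 (by norm_num : (0:ℝ) ≤ 2))
                (mul_le_mul_of_nonneg_left hY2 (by norm_num : (0:ℝ) ≤ 2))
              exact mul_le_mul_of_nonneg_right h4 (by norm_num)
          _ = CII * (q^m*w) := by rw [hCIIdef]; ring
      -- conclusion
      have herrId : errL (m+1) s n = q^m*w := by
        simp only [herrL]
        rw [if_neg (by omega : ¬ (m+1 = 0))]
        rw [Nat.add_sub_cancel, hqdef, hwdef, div_pow, div_mul_div_comm, pow_succ]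
      rw [herrId, hprod s hs]
      have hfin : (∏ u ∈ Finset.range s, (1 + a u)) - (1 + c*q^(m+1)*B)
          = ((∏ u ∈ Finset.range s, (1 + a u)) - 1 - ∑ u ∈ Finset.range s, a u)
            + ((∑ u ∈ Finset.range s, a u) - c*q^(m+1)*B) := by ring
      calc |(∏ u ∈ Finset.range s, (1 + a u)) - (1 + c*q^(m+1)*B)|
          ≤ |(∏ u ∈ Finset.range s, (1 + a u)) - 1 - ∑ u ∈ Finset.range s, a u|
            + |(∑ u ∈ Finset.range s, a u) - c*q^(m+1)*B| := by
            rw [hfin]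
            exact abs_add_le _ _
        _ ≤ CII*(q^m*w) + CI*(q^m*w) := add_le_add hprod2 hsum_a
        _ = (CI + CII)*(q^m*w) := by ring
  -- final conversion
  rcases Nat.eq_zero_or_pos m0 with hm0 | hm0
  · subst hm0
    have hfz : (fun n => Real.exp (lam n (b+0) (t n)) -
        (1 + (((b+0).choose b : ℕ):ℝ) * ((t n:ℝ)/n)^(b+0-b) * B)) = fun _ => (0:ℝ) := by
      funext n
      rw [Nat.add_zero, hbase n (t n), Nat.choose_self, Nat.sub_self]
      simp [hBdef]
    rw [hfz]
    exact isBigO_zero _ _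
  · obtain ⟨C, hC0, hEv⟩ := key m0 (by omega)
    rw [isBigO_iff]
    refine ⟨C * cτ^(m0-1), ?_⟩
    have hev1 : ∀ᶠ n in atTop, (1:ℝ) ≤ (ℓ n:ℝ) := hℓ.eventually_ge_atTop 1
    filter_upwards [hEv, hev1, eventually_ge_atTop 1] with n hn hℓ1 hn1
    have hn0 : (0:ℝ) < n := by exact_mod_cast Nat.lt_of_lt_of_le Nat.zero_lt_one hn1
    have hspec := hn (t n) (le_refl _)
    have hsub : b + m0 - b = m0 := by omega
    rw [hsub]
    simp only [Real.norm_eq_abs]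
    have hMrw : (1 ⊔ ((ℓ n:ℝ)^2/(n:ℝ))) = M n := by rw [hMdef]
    rw [hMrw]
    have herr : errL m0 (t n) n = (t n:ℝ)^(m0-1) * M n / (n:ℝ)^m0 := by
      simp only [herrL, if_neg (by omega : ¬ m0 = 0)]
    rw [herr] at hspec
    -- identify exponents
    have he1 : ((b + m0 : ℕ) : ℤ) - k + r - 2 = (m0:ℤ) - 1 := by omega
    have he2 : ((b + m0 : ℕ) : ℤ) - k + r - 1 = (m0:ℤ) := by omega
    rw [he1, he2]
    have hz1 : (ℓ n:ℝ) ^ ((m0:ℤ) - 1) = (ℓ n:ℝ) ^ (m0 - 1 : ℕ) := by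
      rw [show (m0:ℤ) - 1 = ((m0 - 1 : ℕ) : ℤ) by omega, zpow_natCast]
    have hz2 : (n:ℝ) ^ (m0:ℤ) = (n:ℝ) ^ (m0:ℕ) := zpow_natCast _ _
    rw [hz1, hz2]
    have hg0 : (0:ℝ) ≤ (ℓ n:ℝ)^(m0-1) / (n:ℝ)^m0 * M n :=
      mul_nonneg (div_nonneg (pow_nonneg (Nat.cast_nonneg _) _)
        (pow_nonneg (Nat.cast_nonneg _) _)) (hM0 n)
    rw [abs_of_nonneg hg0]
    have htb : (t n:ℝ)^(m0-1) ≤ cτ^(m0-1) * (ℓ n:ℝ)^(m0-1) := by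
      rw [← mul_pow]
      exact pow_le_pow_left₀ (Nat.cast_nonneg _) (htcτ n) _
    calc |Real.exp (lam n (b + m0) (t n)) -
          (1 + (((b + m0).choose b : ℕ):ℝ) * ((t n:ℝ)/n)^m0 * B)|
        ≤ C * ((t n:ℝ)^(m0-1) * M n / (n:ℝ)^m0) := hspec
      _ ≤ C * ((cτ^(m0-1) * (ℓ n:ℝ)^(m0-1)) * M n / (n:ℝ)^m0) := by
          apply mul_le_mul_of_nonneg_left _ hC0
          apply (div_le_div_iff_of_pos_right (pow_pos hn0 m0)).mpr
          exact mul_le_mul_of_nonneg_right htb (hM0 n)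
      _ = C * cτ^(m0-1) * ((ℓ n:ℝ)^(m0-1) / (n:ℝ)^m0 * M n) := by ring
end
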